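/- Let U ⊆ ℝ³ be open, F : U → ℝ twice continuously differentiable, and λ : U → ℝ differentiable with F_a + F_b·λ + F_c·λ² = 0 identically on U. Then at every point p ∈ U where F_b(p) + 2·F_c(p)·λ(p) ≠ 0, one has the identity (λ_a + λ·λ_b + λ²·λ_c)(p) · (F_b + 2·F_c·λ)(p) = −[ F_aa + 2·F_ab·λ + (2·F_ac + F_bb)·λ² + 2·F_bc·λ³ + F_cc·λ⁴ ](p). In particular, λ_a + λ·λ_b + λ²·λ_c vanishes at p if and only if the quartic S²(F) vanishes at the root (1, λ(p)) of the symbol. -/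

import Mathlib

/-- The partial derivative of `G : ℝ³ → ℝ` in the constant direction `v`. -/
noncomputable def pd (v : ℝ × ℝ × ℝ) (G : ℝ × ℝ × ℝ → ℝ) : ℝ × ℝ × ℝ → ℝ :=
  fun p => fderiv ℝ G p v

/-- Direction of the variable `a`. -/
def ea : ℝ × ℝ × ℝ := (1, 0, 0)
/-- Direction of the variable `b`. -/
def eb : ℝ × ℝ × ℝ := (0, 1, 0)
/-- Direction of the variable `c`. -/
def ec : ℝ × ℝ × ℝ := (0, 0, 1)

lemma pd_pd_eq {F : ℝ × ℝ × ℝ → ℝ} {p : ℝ × ℝ × ℝ}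
    (hF : ContDiffAt ℝ 2 F p) (v w : ℝ × ℝ × ℝ) :
    pd v (pd w F) p = fderiv ℝ (fderiv ℝ F) p v w := by
  have hφ : DifferentiableAt ℝ (fderiv ℝ F) p :=
    (hF.fderiv_right (m := 1) le_rfl).differentiableAt one_ne_zero
  have h : HasFDerivAt (fun q => fderiv ℝ F q w)
      ((ContinuousLinearMap.apply ℝ ℝ w).comp (fderiv ℝ (fderiv ℝ F) p)) p :=
    (ContinuousLinearMap.apply ℝ ℝ w).hasFDerivAt.comp p hφ.hasFDerivAt
  show fderiv ℝ (fun q => fderiv ℝ F q w) p v = _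
  rw [h.fderiv]
  rfl

lemma pd_pd_symm {F : ℝ × ℝ × ℝ → ℝ} {p : ℝ × ℝ × ℝ}
    (hF : ContDiffAt ℝ 2 F p) (v w : ℝ × ℝ × ℝ) :
    pd v (pd w F) p = pd w (pd v F) p := by
  rw [pd_pd_eq hF v w, pd_pd_eq hF w v]
  exact (hF.isSymmSndFDerivAt (by simp)).eq v w

lemma pd_differentiableAt {F : ℝ × ℝ × ℝ → ℝ} {p : ℝ × ℝ × ℝ}
    (hF : ContDiffAt ℝ 2 F p) (w : ℝ × ℝ × ℝ) :
    DifferentiableAt ℝ (pd w F) p := by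
  have hφ : DifferentiableAt ℝ (fderiv ℝ F) p :=
    (hF.fderiv_right (m := 1) le_rfl).differentiableAt one_ne_zero
  exact ((ContinuousLinearMap.apply ℝ ℝ w).hasFDerivAt.comp p hφ.hasFDerivAt).differentiableAt

/-- If `λ` is a characteristic speed of `F` (i.e. `F_a + F_b λ + F_c λ² = 0` on `U`),
then at any point where `F_b + 2 F_c λ ≠ 0`,
`(λ_a + λ λ_b + λ² λ_c) (F_b + 2 F_c λ) = −S²(F)(1, λ)`.
In particular Lax's condition holds at `p` iff the quartic `S²(F)` vanishes at `(1, λ(p))`. -/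
theorem lax_condition_eq_second_symbol
    (U : Set (ℝ × ℝ × ℝ)) (hU : IsOpen U)
    (F lam : ℝ × ℝ × ℝ → ℝ)
    (hF : ContDiffOn ℝ 2 F U) (hlam : DifferentiableOn ℝ lam U)
    (hchar : ∀ q ∈ U, pd ea F q + pd eb F q * lam q + pd ec F q * lam q ^ 2 = 0)
    (p : ℝ × ℝ × ℝ) (hp : p ∈ U)
    (hnd : pd eb F p + 2 * pd ec F p * lam p ≠ 0) :
    (pd ea lam p + lam p * pd eb lam p + lam p ^ 2 * pd ec lam p) *
        (pd eb F p + 2 * pd ec F p * lam p) =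
      -(pd ea (pd ea F) p + 2 * pd eb (pd ea F) p * lam p +
        (2 * pd ec (pd ea F) p + pd eb (pd eb F) p) * lam p ^ 2 +
        2 * pd ec (pd eb F) p * lam p ^ 3 + pd ec (pd ec F) p * lam p ^ 4) ∧
    ((pd ea lam p + lam p * pd eb lam p + lam p ^ 2 * pd ec lam p = 0) ↔
      pd ea (pd ea F) p + 2 * pd eb (pd ea F) p * lam p +
        (2 * pd ec (pd ea F) p + pd eb (pd eb F) p) * lam p ^ 2 +
        2 * pd ec (pd eb F) p * lam p ^ 3 + pd ec (pd ec F) p * lam p ^ 4 = 0) := by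
  have hFp : ContDiffAt ℝ 2 F p := hF.contDiffAt (hU.mem_nhds hp)
  have hL : DifferentiableAt ℝ lam p := (hlam p hp).differentiableAt (hU.mem_nhds hp)
  -- the per-direction differentiated characteristic identity
  have key : ∀ v : ℝ × ℝ × ℝ,
      pd v (pd ea F) p + (pd v (pd eb F) p * lam p + pd eb F p * pd v lam p) +
        (pd v (pd ec F) p * lam p ^ 2 + pd ec F p * (2 * lam p * pd v lam p)) = 0 := by
    intro v
    have hA := (pd_differentiableAt hFp ea).hasFDerivAt
    have hB := (pd_differentiableAt hFp eb).hasFDerivAt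
    have hC := (pd_differentiableAt hFp ec).hasFDerivAt
    have hLf := hL.hasFDerivAt
    have hG : HasFDerivAt
        (fun q => pd ea F q + pd eb F q * lam q + pd ec F q * (lam q * lam q))
        ((fderiv ℝ (pd ea F) p +
          (pd eb F p • fderiv ℝ lam p + lam p • fderiv ℝ (pd eb F) p)) +
          (pd ec F p • (lam p • fderiv ℝ lam p + lam p • fderiv ℝ lam p) +
            (lam p * lam p) • fderiv ℝ (pd ec F) p)) p :=
      (hA.add (hB.mul hLf)).add (hC.mul (hLf.mul hLf))
    have hzero : fderiv ℝ
        (fun q => pd ea F q + pd eb F q * lam q + pd ec F q * (lam q * lam q)) p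
        = 0 := by
      have hev : (fun q => pd ea F q + pd eb F q * lam q + pd ec F q * (lam q * lam q))
          =ᶠ[nhds p] (fun _ => (0 : ℝ)) := by
        apply Filter.eventuallyEq_of_mem (hU.mem_nhds hp)
        intro q hq
        have := hchar q hq
        linear_combination this
      rw [hev.fderiv_eq, fderiv_fun_const]
      rfl
    have := hG.fderiv
    rw [hzero] at this
    have hv := congrArg (fun (T : (ℝ × ℝ × ℝ) →L[ℝ] ℝ) => T v) this.symm
    simp only [ContinuousLinearMap.add_apply, ContinuousLinearMap.smul_apply,
      ContinuousLinearMap.zero_apply, smul_eq_mul, pow_one] at hv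
    show fderiv ℝ (pd ea F) p v + (fderiv ℝ (pd eb F) p v * lam p + pd eb F p * fderiv ℝ lam p v)
        + (fderiv ℝ (pd ec F) p v * lam p ^ 2
          + pd ec F p * (2 * lam p * fderiv ℝ lam p v)) = 0
    linear_combination hv
  have Ea := key ea
  have Eb := key eb
  have Ec := key ec
  have sab := pd_pd_symm hFp ea eb
  have sac := pd_pd_symm hFp ea ec
  have sbc := pd_pd_symm hFp eb ec
  have main : (pd ea lam p + lam p * pd eb lam p + lam p ^ 2 * pd ec lam p) *
      (pd eb F p + 2 * pd ec F p * lam p) =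
      -(pd ea (pd ea F) p + 2 * pd eb (pd ea F) p * lam p +
        (2 * pd ec (pd ea F) p + pd eb (pd eb F) p) * lam p ^ 2 +
        2 * pd ec (pd eb F) p * lam p ^ 3 + pd ec (pd ec F) p * lam p ^ 4) := by
    linear_combination Ea + lam p * Eb + lam p ^ 2 * Ec - lam p * sab - lam p ^ 2 * sac -
      lam p ^ 3 * sbc
  refine ⟨main, ?_⟩
  constructor
  · intro h
    have := main
    rw [h, zero_mul] at this
    linarith
  · intro h
    rw [h] at main
    rcases mul_eq_zero.mp (by linarith : (pd ea lam p + lam p * pd eb lam p +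
        lam p ^ 2 * pd ec lam p) * (pd eb F p + 2 * pd ec F p * lam p) = 0) with h1 | h2
    · exact h1
    · exact absurd h2 hnd
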